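/- (Syndrome decoding correctness) Let L' ∈ F_q^{N×n}, and suppose every z ∈ F_q^n with z_j = 0 for j ∈ [d_i] and z_{d_i+1} ≠ 0 satisfies wt(L' z) ≥ 2δ+1. Let C^{(i)} ≤ F_q^N be the span of the columns of L' indexed by {d_i+1,...,n}, and C_{(i)} ≤ C^{(i)} the span of columns indexed by {d_i+2,...,n}. Let H ∈ F_q^{r×N} be a parity-check matrix of C_{(i)} whose last r−1 rows H^{(i)} form a parity-check matrix of C^{(i)}, with first row h satisfying h · L'^{d_i+1} = s ≠ 0 (where L'^{d_i+1} is the (d_i+1)-th column). Given X' ∈ F_q^{n×t}, an error W ∈ F_q^{N×t} with wt(W) ≤ δ, and any ε ∈ F_q^{N×t} with wt(ε) ≤ δ and H^{(i)} ε = H^{(i)} W, one has (α − hε)/s = X'_{d_i+1}, where α is the first row of H·(L'X' + W − Σ_{j∈[d_i]} L'^{j} X'_j). -/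

import Mathlib

open Matrix Finset

lemma mulVec_mem_span_cols {F : Type*} [Field F] {n N m : ℕ}
    (L' : Matrix (Fin N) (Fin n) F) (z : Fin n → F)
    (hz : ∀ j : Fin n, (j : ℕ) < m → z j = 0) :
    L' *ᵥ z ∈ Submodule.span F
      {c : Fin N → F | ∃ k : Fin n, m ≤ (k : ℕ) ∧ c = fun j => L' j k} := by
  have hrw : L' *ᵥ z = ∑ k : Fin n, z k • (fun j => L' j k) := by
    funext j
    simp [mulVec, dotProduct, Finset.sum_apply, mul_comm]
  rw [hrw]
  refine Submodule.sum_mem _ fun k _ => ?_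
  by_cases hk : (k : ℕ) < m
  · simp [hz k hk]
  · exact Submodule.smul_mem _ _ (Submodule.subset_span ⟨k, not_lt.mp hk, rfl⟩)

lemma mem_span_cols_iff {F : Type*} [Field F] {n N m : ℕ}
    (L' : Matrix (Fin N) (Fin n) F) (x : Fin N → F) :
    x ∈ Submodule.span F
      {c : Fin N → F | ∃ k : Fin n, m ≤ (k : ℕ) ∧ c = fun j => L' j k} ↔
    ∃ z : Fin n → F, (∀ j : Fin n, (j : ℕ) < m → z j = 0) ∧ x = L' *ᵥ z := by
  constructor
  · intro hx
    induction hx using Submodule.span_induction with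
    | mem c hc =>
      obtain ⟨k, hk, rfl⟩ := hc
      refine ⟨Pi.single k 1, fun j hj => Pi.single_eq_of_ne (by rintro rfl; omega) 1, ?_⟩
      funext j
      simp [mulVec, dotProduct, Pi.single_apply, mul_ite]
    | zero => exact ⟨0, by simp, by simp⟩
    | add x y _ _ hx hy =>
      obtain ⟨zx, hzx, rfl⟩ := hx
      obtain ⟨zy, hzy, rfl⟩ := hy
      exact ⟨zx + zy, fun j hj => by simp [hzx j hj, hzy j hj], by rw [mulVec_add]⟩
    | smul a x _ hx =>
      obtain ⟨z, hz, rfl⟩ := hx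
      exact ⟨a • z, fun j hj => by simp [hz j hj], by rw [mulVec_smul]⟩
  · rintro ⟨z, hz, rfl⟩
    exact mulVec_mem_span_cols L' z hz

/-- syndrome decoding correctness: suppose every `z` vanishing on
the first `d_i` coordinates with `z_{d_i+1} ≠ 0` has `wt(L' z) ≥ 2δ+1`. Let `C⁽ⁱ⁾`
be the span of columns `d_i+1,…,n` of `L'` and `C₍ᵢ₎` the span of columns
`d_i+2,…,n`; let `h` together with the parity-check matrix `H⁽ⁱ⁾` of `C⁽ⁱ⁾` form a
parity-check matrix of `C₍ᵢ₎`, with `h · L'^{d_i+1} = s ≠ 0`. Then for any data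
`X'`, error `W` of row weight `≤ δ`, and any `ε` of row weight `≤ δ` with
`H⁽ⁱ⁾ ε = H⁽ⁱ⁾ W`, the decoder output `(α − hε)/s` equals the request
`X'_{d_i+1}`, where `α = h · (L'X' + W − ∑_{j ≤ d_i} L'^j X'_j)`. -/
theorem syndrome_decoding_correct
    (F : Type*) [Field F] [Fintype F] [DecidableEq F]
    (n t N d_i δ r' : ℕ) (hdn : d_i < n)
    (L' : Matrix (Fin N) (Fin n) F)
    (hwt : ∀ z : Fin n → F, (∀ j : Fin n, (j : ℕ) < d_i → z j = 0) →
        z ⟨d_i, hdn⟩ ≠ 0 → 2 * δ + 1 ≤ hammingNorm (L' *ᵥ z))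
    (h : Fin N → F) (Hi : Matrix (Fin r') (Fin N) F)
    (hHi : ∀ x : Fin N → F, Hi *ᵥ x = 0 ↔
        x ∈ Submodule.span F
          {c : Fin N → F | ∃ k : Fin n, d_i ≤ (k : ℕ) ∧ c = fun j => L' j k})
    (hH : ∀ x : Fin N → F, (h ⬝ᵥ x = 0 ∧ Hi *ᵥ x = 0) ↔
        x ∈ Submodule.span F
          {c : Fin N → F | ∃ k : Fin n, d_i + 1 ≤ (k : ℕ) ∧ c = fun j => L' j k})
    (s : F) (hs : h ⬝ᵥ (fun j => L' j ⟨d_i, hdn⟩) = s) (hs0 : s ≠ 0)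
    (X' : Matrix (Fin n) (Fin t) F)
    (W : Matrix (Fin N) (Fin t) F)
    (hW : (@Finset.filter _ (fun j => W j ≠ 0) (fun _ => inferInstance) Finset.univ).card ≤ δ)
    (ε : Matrix (Fin N) (Fin t) F)
    (hε : (@Finset.filter _ (fun j => ε j ≠ 0) (fun _ => inferInstance) Finset.univ).card ≤ δ)
    (hsyn : Hi * ε = Hi * W) :
    ∀ k : Fin t,
      s⁻¹ * ((h ⬝ᵥ fun j =>
          (L' * X' + W
            - L' * Matrix.of fun (j' : Fin n) (k' : Fin t) => if (j' : ℕ) < d_i then X' j' k' else 0) j k)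
        - (h ⬝ᵥ fun j => ε j k))
      = X' ⟨d_i, hdn⟩ k := by
  intro k
  classical
  set e : Fin n := ⟨d_i, hdn⟩ with he
  -- h annihilates anything in C_{(i)}
  have hker : ∀ z : Fin n → F, (∀ j : Fin n, (j : ℕ) < d_i + 1 → z j = 0) →
      h ⬝ᵥ (L' *ᵥ z) = 0 := fun z hz =>
    ((hH _).mpr (mulVec_mem_span_cols L' z hz)).1
  -- W - ε (column k) is annihilated by h
  have hWe : h ⬝ᵥ (fun j => W j k - ε j k) = 0 := by
    have hHi0 : Hi *ᵥ (fun j => W j k - ε j k) = 0 := by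
      funext i
      have hcol : (Hi * ε) i k = (Hi * W) i k := by rw [hsyn]
      simp only [Matrix.mul_apply] at hcol
      simp [mulVec, dotProduct, mul_sub, Finset.sum_sub_distrib, hcol]
    obtain ⟨z, hz, hxz⟩ := (mem_span_cols_iff L' _).mp ((hHi _).mp hHi0)
    have hz0 : z e = 0 := by
      by_contra hzne
      have h1 := hwt z hz hzne
      have h2 : hammingNorm (L' *ᵥ z) ≤ 2 * δ := by
        rw [← hxz]
        have hsub : (Finset.univ.filter fun j => (W j k - ε j k) ≠ 0) ⊆
            (Finset.univ.filter fun j => W j ≠ 0) ∪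
            (Finset.univ.filter fun j => ε j ≠ 0) := by
          intro j hj
          simp only [mem_filter, mem_union, mem_univ, true_and] at hj ⊢
          by_contra hc
          push_neg at hc
          obtain ⟨h1', h2'⟩ := hc
          apply hj
          rw [show W j k = (W j) k from rfl, h1', show ε j k = (ε j) k from rfl, h2']
          simp
        calc hammingNorm (fun j => W j k - ε j k)
            ≤ ((Finset.univ.filter fun j => W j ≠ 0) ∪
               (Finset.univ.filter fun j => ε j ≠ 0)).card := by
              unfold hammingNorm
              exact Finset.card_le_card hsub
          _ ≤ (Finset.univ.filter fun j => W j ≠ 0).card +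
              (Finset.univ.filter fun j => ε j ≠ 0).card := Finset.card_union_le _ _
          _ ≤ 2 * δ := by
            have := Nat.add_le_add hW hε
            rw [two_mul]
            convert this
      omega
    rw [hxz]
    apply hker
    intro j hj
    have hev : (e : ℕ) = d_i := rfl
    rcases Nat.lt_or_ge (j : ℕ) d_i with h' | h'
    · exact hz j h'
    · have hje : j = e := Fin.ext (by omega)
      rw [hje]; exact hz0
  -- decompose the received column
  set z0 : Fin n → F := fun m => if (m : ℕ) < d_i then 0 else X' m k with hz0def
  set z1 : Fin n → F := fun m => if (m : ℕ) < d_i + 1 then 0 else X' m k with hz1def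
  have hv : (fun j => (L' * X' + W
      - L' * Matrix.of fun (j' : Fin n) (k' : Fin t) =>
          if (j' : ℕ) < d_i then X' j' k' else 0) j k)
      = (L' *ᵥ z0) + (fun j => W j k) := by
    funext j
    simp only [Matrix.add_apply, Matrix.sub_apply, Matrix.mul_apply, Matrix.of_apply,
      Pi.add_apply, mulVec, dotProduct]
    rw [add_sub_right_comm, ← Finset.sum_sub_distrib]
    congr 1
    apply Finset.sum_congr rfl
    intro m _
    by_cases hm : (m : ℕ) < d_i <;> simp [hz0def, hm]
  set dv : Fin n → F := fun m => if m = e then 1 else 0 with hdv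
  have hev : (e : ℕ) = d_i := rfl
  have hz01 : z0 = z1 + X' e k • dv := by
    funext m
    simp only [Pi.add_apply, Pi.smul_apply, smul_eq_mul, hz0def, hz1def, hdv]
    by_cases hm : (m : ℕ) < d_i
    · have hme : m ≠ e := by rintro rfl; omega
      simp [hm, Nat.lt_succ_of_lt hm, hme]
    · by_cases hm' : (m : ℕ) = d_i
      · have hme : m = e := Fin.ext (by omega)
        subst hme
        simp [hm]
        intro; omega
      · have hme : m ≠ e := by rintro rfl; omega
        simp [hm, hme, show ¬ (m : ℕ) < d_i + 1 by omega]
  have hsingle : L' *ᵥ dv = fun j => L' j e := by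
    funext j
    simp [hdv, mulVec, dotProduct, mul_ite]
  have hz1ker : h ⬝ᵥ (L' *ᵥ z1) = 0 := hker z1 (fun j hj => by simp [hz1def, hj]; intro; omega)
  rw [hv]
  have : (h ⬝ᵥ (L' *ᵥ z0 + fun j => W j k)) - (h ⬝ᵥ fun j => ε j k)
      = h ⬝ᵥ (L' *ᵥ z0) + h ⬝ᵥ (fun j => W j k - ε j k) := by
    have hsub' : (fun j => W j k - ε j k) = (fun j => W j k) - (fun j => ε j k) := rfl
    rw [dotProduct_add, hsub', dotProduct_sub]
    ring
  rw [this, hWe, add_zero, hz01, mulVec_add, mulVec_smul, dotProduct_add,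
    dotProduct_smul, hz1ker, zero_add, hsingle, smul_eq_mul, hs]
  rw [mul_comm (X' e k) s, ← mul_assoc, inv_mul_cancel₀ hs0, one_mul]
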